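/- Sequential composition: if mechanisms M₁, ..., M_r with independent randomness satisfy ε₁-DP, ..., ε_r-DP respectively, then the mechanism releasing the tuple (M₁(D), ..., M_r(D)) satisfies (ε₁ + ⋯ + ε_r)-DP. -/

import Mathlib

open MeasureTheory

open Set in
private lemma pi_mono_aux {r : ℕ} {Ω : Fin r → Type*} [∀ i, MeasurableSpace (Ω i)]
    (μ ν : ∀ i, Measure (Ω i)) (h : ∀ i, ∀ s : Set (Ω i), μ i s ≤ ν i s)
    (S : Set (∀ i, Ω i)) (hS : MeasurableSet S) :
    Measure.pi μ S ≤ Measure.pi ν S := by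
  rw [Measure.pi, Measure.pi, toMeasure_apply _ _ hS, toMeasure_apply _ _ hS]
  refine le_trans ?_ le_rfl
  have : (OuterMeasure.pi fun i => (μ i).toOuterMeasure) ≤
      (OuterMeasure.pi fun i => (ν i).toOuterMeasure) := by
    rw [OuterMeasure.le_pi]
    intro s _
    refine le_trans (OuterMeasure.pi_pi_le _ s) ?_
    exact Finset.prod_le_prod' fun i _ => h i (s i)
  exact this S

private lemma pi_smul_aux {r : ℕ} {Ω : Fin r → Type*} [∀ i, MeasurableSpace (Ω i)]
    (μ : ∀ i, Measure (Ω i)) [∀ i, SigmaFinite (μ i)] (c : Fin r → NNReal) :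
    Measure.pi (fun i => c i • μ i) = (∏ i, c i) • Measure.pi μ := by
  refine Measure.pi_eq (μ := fun i => c i • μ i) (fun s hs => ?_)
  simp [Measure.pi_pi, Finset.prod_mul_distrib,
    ENNReal.coe_finset_prod]
  rw [ENNReal.smul_def, smul_eq_mul, ENNReal.coe_finset_prod]

theorem dp_sequential_composition {Db : Type*} {r : ℕ}
    {Ω : Fin r → Type*} [∀ i, MeasurableSpace (Ω i)]
    (Neighbor : Db → Db → Prop) (ε : Fin r → ℝ)
    (M : ∀ i : Fin r, Db → Measure (Ω i))
    (hprob : ∀ i D, IsProbabilityMeasure (M i D))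
    (hDP : ∀ i, ∀ D D', Neighbor D D' → ∀ S : Set (Ω i), MeasurableSet S →
      M i D S ≤ ENNReal.ofReal (Real.exp (ε i)) * M i D' S) :
    ∀ D D', Neighbor D D' → ∀ S : Set (∀ i, Ω i), MeasurableSet S →
      Measure.pi (fun i => M i D) S ≤
        ENNReal.ofReal (Real.exp (∑ i, ε i)) * Measure.pi (fun i => M i D') S := by
  intro D D' hN S hS
  have hprobD := fun i => hprob i D
  have hprobD' := fun i => hprob i D'
  set c : Fin r → NNReal := fun i => (Real.exp (ε i)).toNNReal with hc
  -- M i D ≤ c i • M i D' as measures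
  have hle : ∀ i, M i D ≤ (c i) • (M i D') := by
    intro i
    rw [Measure.le_iff]
    intro s hs
    have := hDP i D D' hN s hs
    rw [Measure.smul_apply, ENNReal.smul_def, smul_eq_mul]
    simpa [hc, ENNReal.ofReal] using this
  have hmono := pi_mono_aux (fun i => M i D) (fun i => (c i) • M i D')
    (fun i s => Measure.le_iff'.mp (hle i) s) S hS
  rw [pi_smul_aux (fun i => M i D') c] at hmono
  refine hmono.trans ?_
  simp only [Measure.smul_apply, ENNReal.smul_def, smul_eq_mul]
  gcongr
  rw [Real.exp_sum, ENNReal.coe_finset_prod,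
    ENNReal.ofReal_prod_of_nonneg (fun i _ => (Real.exp_pos _).le)]
  exact le_of_eq (Finset.prod_congr rfl fun i _ => by simp [hc, ENNReal.ofReal])
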